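/- (Tverberg's theorem) Given m ≥ (κ)(n+1) + 1 points x_1,...,x_m in R^n, there exists a partition of {1,...,m} into κ+1 pairwise disjoint subsets B_1,...,B_{κ+1} such that the intersection of the convex hulls conv(x_{B_1}), ..., conv(x_{B_{κ+1}}) is nonempty. -/

import Mathlib

open Finset
open scoped RealInnerProductSpace

set_option linter.unusedSectionVars false
set_option maxHeartbeats 1000000

section CC
variable {E : Type*} [NormedAddCommGroup E] [InnerProductSpace ℝ E] [FiniteDimensional ℝ E]
variable {ι : Type*} [Fintype ι] [DecidableEq ι]

/-- the linear map sending weights to the weighted combination -/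
noncomputable def combL (c : ι → E) : (ι → ℝ) →ₗ[ℝ] E where
  toFun l := ∑ i, l i • c i
  map_add' f g := by simp [add_smul, Finset.sum_add_distrib]
  map_smul' r f := by simp [Finset.smul_sum, mul_smul]

/-- the set of convex combinations -/
noncomputable def combSet (c : ι → E) : Set E := (combL c) '' stdSimplex ℝ ι

lemma combSet_convex (c : ι → E) : Convex ℝ (combSet c) :=
  (convex_stdSimplex ℝ ι).linear_image (combL c)

lemma combSet_compact (c : ι → E) : IsCompact (combSet c) :=
  (isCompact_stdSimplex ℝ ι).image (combL c).continuous_of_finiteDimensional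

lemma mem_combSet_self (c : ι → E) (i : ι) : c i ∈ combSet c := by
  refine ⟨fun j => if j = i then 1 else 0, ⟨fun j => by positivity, by simp⟩, ?_⟩
  simp [combL, Finset.sum_ite_eq']

lemma combSet_nonempty [Nonempty ι] (c : ι → E) : (combSet c).Nonempty :=
  ⟨_, mem_combSet_self c (Classical.arbitrary ι)⟩



/-- given an affine dependence, we can move weights to make one weight vanish. -/
lemma kill_coord {c : ι → E} {q : E} {μ w : ι → ℝ}
    (hμ0 : ∀ i, 0 ≤ μ i) (hμ1 : ∑ i, μ i = 1) (hμc : ∑ i, μ i • c i = q)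
    (hw0 : ∑ i, w i = 0) (hwc : ∑ i, w i • c i = 0) (hwp : ∃ i, 0 < w i) :
    ∃ μ' : ι → ℝ, (∀ i, 0 ≤ μ' i) ∧ (∑ i, μ' i = 1) ∧ (∑ i, μ' i • c i = q) ∧ ∃ i0, μ' i0 = 0 := by
  classical
  set P : Finset ι := univ.filter (fun i => 0 < w i) with hP
  have hPne : P.Nonempty := by
    obtain ⟨i, hi⟩ := hwp
    exact ⟨i, by simp [hP, hi]⟩
  set t : ℝ := P.inf' hPne (fun i => μ i / w i) with ht
  obtain ⟨i1, hi1P, hi1⟩ := Finset.exists_mem_eq_inf' hPne (fun i => μ i / w i)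
  have hwi1 : 0 < w i1 := by simpa [hP] using hi1P
  have htnn : 0 ≤ t := by
    apply Finset.le_inf'
    intro i hi
    have : 0 < w i := by simpa [hP] using hi
    exact div_nonneg (hμ0 i) this.le
  refine ⟨fun i => μ i - t * w i, ?_, ?_, ?_, ⟨i1, ?_⟩⟩
  · intro i
    show 0 ≤ μ i - t * w i
    rcases le_or_gt (w i) 0 with h | h
    · have : t * w i ≤ 0 := mul_nonpos_of_nonneg_of_nonpos htnn h
      linarith [hμ0 i]
    · have hiP : i ∈ P := by simp [hP, h]
      have h1 : t ≤ μ i / w i := Finset.inf'_le _ hiP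
      have h2 : t * w i ≤ μ i := by
        rw [← le_div_iff₀ h]; exact h1
      linarith
  · simp only [Finset.sum_sub_distrib, ← Finset.mul_sum, hμ1, hw0, mul_zero, sub_zero]
  · simp only [sub_smul, Finset.sum_sub_distrib, hμc, mul_smul, ← Finset.smul_sum, hwc,
      smul_zero, sub_zero]
  · show μ i1 - t * w i1 = 0
    rw [ht, hi1, div_mul_cancel₀ _ hwi1.ne', sub_self]


/-- If we have one more point than the dimension, all lying in the affine hyperplane
through `q` orthogonal to `q`, there is an affine dependence. -/
lemma exists_dependence (hcard : Fintype.card ι = Module.finrank ℝ E + 1)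
    {c : ι → E} {q : E} (hq : q ≠ 0)
    (hperp : ∀ i, ⟪q, c i - q⟫ = 0) :
    ∃ w : ι → ℝ, (∑ i, w i = 0) ∧ (∑ i, w i • c i = 0) ∧ ∃ i, w i ≠ 0 := by
  classical
  -- the functional (t, v) ↦ ⟪q, v⟫ on ℝ × E
  let φ : (ℝ × E) →ₗ[ℝ] ℝ :=
    { toFun := fun p => ⟪q, p.2⟫
      map_add' := fun p₁ p₂ => by simp [inner_add_right]
      map_smul' := fun r p => by simp [real_inner_smul_right] }
  have hsurj : Function.Surjective φ := by
    intro r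
    refine ⟨(0, (r / ‖q‖ ^ 2) • q), ?_⟩
    have hq2 : ‖q‖ ^ 2 ≠ 0 := pow_ne_zero 2 (norm_ne_zero_iff.2 hq)
    simp only [φ, LinearMap.coe_mk, AddHom.coe_mk, real_inner_smul_right,
      real_inner_self_eq_norm_sq]
    field_simp
  have hker : Module.finrank ℝ (LinearMap.ker φ) = Module.finrank ℝ E := by
    have h1 := LinearMap.finrank_range_add_finrank_ker φ
    rw [LinearMap.range_eq_top.2 hsurj, finrank_top, Module.finrank_self,
      Module.finrank_prod, Module.finrank_self] at h1
    omega
  -- the family (1, c i - q) lies in ker φ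
  have hmem : ∀ i, ((1 : ℝ), c i - q) ∈ LinearMap.ker φ := by
    intro i
    simp only [LinearMap.mem_ker, φ, LinearMap.coe_mk, AddHom.coe_mk]
    exact hperp i
  set u : ι → LinearMap.ker φ := fun i => ⟨((1 : ℝ), c i - q), hmem i⟩ with hu
  have hnli : ¬ LinearIndependent ℝ u := by
    intro hli
    have := hli.fintype_card_le_finrank
    rw [hker] at this
    omega
  obtain ⟨g, hg, i, hgi⟩ := Fintype.not_linearIndependent_iff.1 hnli
  have hg' : (∑ i, g i • (((1 : ℝ), c i - q) : ℝ × E)) = 0 := by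
    have h := congrArg (Subtype.val) hg
    simpa [u] using h
  have h1 : ∑ i, g i = 0 := by
    have h := congrArg Prod.fst hg'
    simpa [Prod.fst_sum] using h
  have h2 : ∑ i, g i • (c i - q) = 0 := by
    have h := congrArg Prod.snd hg'
    simpa [Prod.snd_sum] using h
  refine ⟨g, h1, ?_, ⟨i, hgi⟩⟩
  have : ∑ i, g i • (c i - q) = (∑ i, g i • c i) - (∑ i, g i) • q := by
    rw [Finset.sum_smul]
    rw [← Finset.sum_sub_distrib]
    congr 1; ext j; rw [smul_sub]
  rw [this, h1, zero_smul, sub_zero] at h2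
  exact h2

end CC

section CCMain
variable {E : Type*} [NormedAddCommGroup E] [InnerProductSpace ℝ E] [FiniteDimensional ℝ E]
variable {ι : Type*} [Fintype ι] [DecidableEq ι]

/-- Colorful Carathéodory theorem for the origin. -/
theorem colorful_caratheodory (hcard : Fintype.card ι = Module.finrank ℝ E + 1)
    (S : ι → Finset E) (hS : ∀ i, (0 : E) ∈ convexHull ℝ (S i : Set E)) :
    ∃ (c : ι → E) (l : ι → ℝ), (∀ i, c i ∈ S i) ∧ (∀ i, 0 ≤ l i) ∧
      (∑ i, l i = 1) ∧ (∑ i, l i • c i = 0) := by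
  classical
  have hNE : Nonempty ι := by
    rw [← Fintype.card_pos_iff]; omega
  have hSne : ∀ i, (S i).Nonempty := by
    intro i
    have := (convexHull_nonempty_iff (𝕜 := ℝ)).1 ⟨0, hS i⟩
    exact Finset.coe_nonempty.1 this
  -- the type of colorful choices
  let C := ∀ i : ι, {y : E // y ∈ S i}
  have hCne : Nonempty C := ⟨fun i => ⟨(hSne i).choose, (hSne i).choose_spec⟩⟩
  -- minimize distance to 0 over choices
  obtain ⟨c₀, hc₀⟩ := Finite.exists_min
    (fun c : C => Metric.infDist 0 (combSet (fun i => (c i : E))))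
  set c : ι → E := fun i => (c₀ i : E) with hc
  set K : Set E := combSet c with hK
  have hKco : Convex ℝ K := combSet_convex c
  have hKcp : IsCompact K := combSet_compact c
  have hKne : K.Nonempty := combSet_nonempty c
  obtain ⟨q, hqK, hqd⟩ := hKcp.exists_infDist_eq_dist hKne 0
  by_cases hq0 : q = 0
  · subst hq0
    obtain ⟨l, hl, hlc⟩ := hqK
    exact ⟨c, l, fun i => (c₀ i).2, hl.1, hl.2, hlc⟩
  · exfalso
    -- variational inequality
    have hvar : ∀ y ∈ K, ⟪(0 : E) - q, y - q⟫ ≤ 0 := by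
      rw [← norm_eq_iInf_iff_real_inner_le_zero hKco hqK]
      rw [show (⨅ w : K, ‖(0:E) - w‖) = Metric.infDist 0 K by
        rw [Metric.infDist_eq_iInf]
        congr 1; ext w; rw [dist_eq_norm]]
      rw [hqd, dist_eq_norm]
    -- get weights for q
    obtain ⟨μ, hμs, hμc₀⟩ := hqK
    have hμc : ∑ i, μ i • c i = q := hμc₀
    -- produce weights with a zero coordinate
    have hzero : ∃ μ' : ι → ℝ, (∀ i, 0 ≤ μ' i) ∧ (∑ i, μ' i = 1) ∧
        (∑ i, μ' i • c i = q) ∧ ∃ i0, μ' i0 = 0 := by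
      by_cases hex : ∃ i0, μ i0 = 0
      · exact ⟨μ, hμs.1, hμs.2, hμc, hex⟩
      · push_neg at hex
        have hpos : ∀ i, 0 < μ i := fun i => lt_of_le_of_ne (hμs.1 i) (Ne.symm (hex i))
        -- each point is orthogonal: ⟪q, c i - q⟫ = 0
        have hperp : ∀ i, ⟪q, c i - q⟫ = 0 := by
          have hsum : ∑ i, μ i * ⟪q, c i - q⟫ = 0 := by
            have hterm : ∀ i ∈ Finset.univ, μ i * ⟪q, c i - q⟫
                = ⟪q, μ i • c i⟫ - μ i * ⟪q, q⟫ := by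
              intro i _
              rw [inner_sub_right, real_inner_smul_right, mul_sub]
            rw [Finset.sum_congr rfl hterm, Finset.sum_sub_distrib, ← inner_sum, hμc,
              ← Finset.sum_mul, hμs.2, one_mul, sub_self]
          have hge : ∀ i ∈ Finset.univ, 0 ≤ μ i * ⟪q, c i - q⟫ := by
            intro i _
            have h1 := hvar (c i) (mem_combSet_self c i)
            rw [zero_sub, inner_neg_left] at h1
            have h2 : 0 ≤ ⟪q, c i - q⟫ := by linarith
            exact mul_nonneg (hμs.1 i) h2
          have hz := (Finset.sum_eq_zero_iff_of_nonneg hge).1 hsum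
          intro i
          have hzi := hz i (Finset.mem_univ i)
          have hi := hpos i
          exact (mul_eq_zero.1 hzi).resolve_left hi.ne'
        obtain ⟨w, hw0, hwc, i, hwi⟩ := exists_dependence hcard hq0 hperp
        rcases lt_or_gt_of_ne hwi with hneg | hpos'
        · refine kill_coord hμs.1 hμs.2 hμc ?_ ?_ ⟨i, ?_⟩ (w := fun j => - w j)
          · simp [hw0]
          · simp [hwc]
          · simpa using hneg
        · exact kill_coord hμs.1 hμs.2 hμc hw0 hwc ⟨i, hpos'⟩
    obtain ⟨μ', hμ'0, hμ'1, hμ'c, i0, hμ'i0⟩ := hzero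
    -- find a better point s in S i0
    have hqnorm : (0:ℝ) < ‖q‖ ^ 2 := pow_pos (norm_pos_iff.2 hq0) 2
    set g : E → ℝ := fun y => ⟪-q, y⟫ with hg
    have hglin : IsLinearMap ℝ g := ⟨fun a b => inner_add_right _ _ _,
      fun r a => real_inner_smul_right _ _ _⟩
    set M : ℝ := (S i0).sup' (hSne i0) g with hM
    have hhull : convexHull ℝ (S i0 : Set E) ⊆ {y | g y ≤ M} :=
      convexHull_min (fun y hy => Finset.le_sup' g hy) (convex_halfSpace_le hglin M)
    have hM0 : (0:ℝ) ≤ M := by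
      have := hhull (hS i0)
      simpa [hg] using this
    obtain ⟨s, hsS, hgs⟩ := Finset.exists_mem_eq_sup' (hSne i0) g
    -- key inequality: ⟪q, s - q⟫ ≤ -‖q‖²
    have hkey : ⟪q, s - q⟫ ≤ -‖q‖ ^ 2 := by
      have h1 : g s = M := hgs.symm
      have heq : ⟪q, s - q⟫ = -(g s) - ‖q‖^2 := by
        simp only [hg, inner_sub_right, inner_neg_left, real_inner_self_eq_norm_sq]
        ring
      rw [heq, h1]
      linarith
    -- s ≠ q
    have hsq : s ≠ q := by
      intro h
      rw [h, sub_self, inner_zero_right] at hkey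
      linarith
    have hD : (0:ℝ) < ‖s - q‖ ^ 2 :=
      pow_pos (norm_pos_iff.2 (sub_ne_zero.2 hsq)) 2
    set t : ℝ := min 1 (‖q‖ ^ 2 / ‖s - q‖ ^ 2) with htdef
    have ht0 : 0 < t := lt_min one_pos (by positivity)
    have ht1 : t ≤ 1 := min_le_left _ _
    have htD : t * ‖s - q‖ ^ 2 ≤ ‖q‖ ^ 2 := by
      have : t ≤ ‖q‖ ^ 2 / ‖s - q‖ ^ 2 := min_le_right _ _
      rw [← le_div_iff₀ hD]; exact this
    -- the new choice
    set c' : C := Function.update c₀ i0 ⟨s, hsS⟩ with hc'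
    set cs : ι → E := fun i => (c' i : E) with hcs
    have hcs_eq : ∀ i, i ≠ i0 → cs i = c i := by
      intro i hi
      simp [hcs, hc', Function.update_of_ne hi, hc]
    have hcs_i0 : cs i0 = s := by simp [hcs, hc']
    -- q ∈ combSet cs
    have hqK' : q ∈ combSet cs := by
      refine ⟨μ', ⟨hμ'0, hμ'1⟩, ?_⟩
      show ∑ i, μ' i • cs i = q
      rw [← hμ'c]
      apply Finset.sum_congr rfl
      intro i _
      by_cases hi : i = i0
      · subst hi; rw [hμ'i0, zero_smul, zero_smul]
      · rw [hcs_eq i hi]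
    have hsK' : s ∈ combSet cs := by
      rw [← hcs_i0]; exact mem_combSet_self cs i0
    -- the point y on segment
    set y : E := q + t • (s - q) with hy
    have hyK' : y ∈ combSet cs := by
      have hmem := (combSet_convex cs) hqK' hsK'
        (show (0:ℝ) ≤ 1 - t by linarith) ht0.le (show (1 - t) + t = 1 by ring)
      have hyy : (1 - t) • q + t • s = y := by
        rw [hy, smul_sub]; module
      rwa [hyy] at hmem
    -- norm estimate
    have hynorm : ‖y‖ ^ 2 < ‖q‖ ^ 2 := by
      have hexp : ‖y‖ ^ 2 = ‖q‖ ^ 2 + 2 * (t * ⟪q, s - q⟫) + t ^ 2 * ‖s - q‖ ^ 2 := by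
        rw [hy, norm_add_sq_real, real_inner_smul_right, norm_smul]
        rw [mul_pow, Real.norm_eq_abs, sq_abs]
      have h2 : t ^ 2 * ‖s - q‖ ^ 2 ≤ t * ‖q‖ ^ 2 := by
        have : t ^ 2 * ‖s - q‖ ^ 2 = t * (t * ‖s - q‖ ^ 2) := by ring
        rw [this]
        exact mul_le_mul_of_nonneg_left htD ht0.le
      have h3 : t * ⟪q, s - q⟫ ≤ t * (-‖q‖ ^ 2) := mul_le_mul_of_nonneg_left hkey ht0.le
      calc ‖y‖ ^ 2 ≤ ‖q‖ ^ 2 + 2 * (t * (-‖q‖^2)) + t * ‖q‖ ^ 2 := by rw [hexp]; linarith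
        _ = ‖q‖ ^ 2 - t * ‖q‖ ^ 2 := by ring
        _ < ‖q‖ ^ 2 := by nlinarith
    have hylt : ‖y‖ < ‖q‖ :=
      lt_of_pow_lt_pow_left₀ 2 (norm_nonneg q) hynorm
    -- contradiction with minimality
    have hmin := hc₀ c'
    have hle : Metric.infDist 0 (combSet cs) ≤ ‖y‖ := by
      have := Metric.infDist_le_dist_of_mem hyK' (x := (0:E))
      rwa [dist_zero_left] at this
    rw [← hcs] at hmin
    have : Metric.infDist 0 K = ‖q‖ := by rw [hqd, dist_zero_left]
    rw [this] at hmin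
    exact absurd (lt_of_le_of_lt hle hylt) (not_lt.2 hmin)

end CCMain

/-- Tverberg's theorem: if m ≥ κ(n+1)+1, there is a partition of
{1,...,m} into κ+1 pairwise disjoint subsets whose convex hulls have a common
point. -/
theorem stmt5 {n m κ : ℕ} (x : Fin m → EuclideanSpace ℝ (Fin n))
    (h : κ * (n + 1) + 1 ≤ m) :
    ∃ B : Fin (κ + 1) → Finset (Fin m),
      (∀ i j, i ≠ j → Disjoint (B i) (B j)) ∧
      Finset.univ.biUnion B = Finset.univ ∧
      (⋂ i, convexHull ℝ (x '' ↑(B i))).Nonempty := by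
  classical
  set N := κ * (n + 1) + 1 with hN
  set e : Fin N → Fin m := Fin.castLE h with he
  set xh : Fin N → (Fin (n+1) → ℝ) := fun i => Fin.snoc (fun k => x (e i) k) 1 with hxh
  have hxh_last : ∀ i, xh i (Fin.last n) = 1 := by intro i; simp [hxh]
  have hxh_cast : ∀ i k, xh i (Fin.castSucc k) = x (e i) k := by intro i k; simp [hxh]
  set Q : Fin (κ+1) → Fin κ → ℝ := fun j k =>
    (if j = Fin.castSucc k then 1 else 0) - (if j = Fin.last κ then 1 else 0) with hQ
  have Qeval : ∀ (a : Fin (κ+1) → ℝ) (k : Fin κ),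
      ∑ j, a j * Q j k = a (Fin.castSucc k) - a (Fin.last κ) := by
    intro a k
    simp [hQ, mul_sub, mul_ite, Finset.sum_sub_distrib, Finset.sum_ite_eq']
  have Qsum : ∀ k, ∑ j, Q j k = 0 := by
    intro k
    have := Qeval (fun _ => 1) k
    simpa using this
  set φ : Fin (κ+1) → Fin N → EuclideanSpace ℝ (Fin κ × Fin (n+1)) :=
    fun j i => WithLp.toLp 2 (fun p : Fin κ × Fin (n+1) => Q j p.1 * xh i p.2) with hφ
  have hφ_apply : ∀ j i p, φ j i p = Q j p.1 * xh i p.2 := fun j i p => rfl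
  set S : Fin N → Finset (EuclideanSpace ℝ (Fin κ × Fin (n+1))) := fun i => Finset.image (fun j => φ j i) Finset.univ with hSdef
  have hcard : Fintype.card (Fin N)
      = Module.finrank ℝ (EuclideanSpace ℝ (Fin κ × Fin (n+1))) + 1 := by
    simp [finrank_euclideanSpace, hN]
  have hS0 : ∀ i, (0 : EuclideanSpace ℝ (Fin κ × Fin (n+1)))
      ∈ convexHull ℝ (S i : Set (EuclideanSpace ℝ (Fin κ × Fin (n+1)))) := by
    intro i
    have hsum : ∑ j, φ j i = 0 := by
      ext p
      have h1 : (∑ j, φ j i) p = ∑ j, φ j i p := by rw [WithLp.ofLp_sum]; exact Finset.sum_apply p Finset.univ _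
      rw [h1]
      have h2 : ∑ j, φ j i p = (∑ j, Q j p.1) * xh i p.2 := by
        rw [Finset.sum_mul]
      rw [h2, Qsum, zero_mul]
      rfl
    have hcm : (Finset.univ : Finset (Fin (κ+1))).centerMass
        (fun _ => (1:ℝ)) (fun j => φ j i) = 0 := by
      rw [Finset.centerMass]
      simp only [one_smul]
      rw [hsum, smul_zero]
    have hmem := Finset.centerMass_mem_convexHull (Finset.univ : Finset (Fin (κ+1)))
      (w := fun _ => (1:ℝ)) (fun j _ => zero_le_one)
      (by simp; positivity) (z := fun j => φ j i)
      (fun j _ => Finset.mem_image_of_mem (f := fun j => φ j i) (Finset.mem_univ j))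
    rwa [hcm] at hmem
  obtain ⟨c, l, hcS, hl0, hl1, hlc⟩ := colorful_caratheodory hcard S hS0
  have hex : ∀ i, ∃ j, φ j i = c i := by
    intro i
    obtain ⟨j, _, hj⟩ := Finset.mem_image.1 (hcS i)
    exact ⟨j, hj⟩
  choose σ hσ using hex
  set A : Fin (κ+1) → Finset (Fin N) := fun j => Finset.univ.filter (fun i => σ i = j) with hA
  set v : Fin (κ+1) → Fin (n+1) → ℝ := fun j l' => ∑ i ∈ A j, l i * xh i l' with hv
  -- the crucial identity
  have hkey : ∀ (k : Fin κ) (l' : Fin (n+1)), ∑ j, v j l' * Q j k = 0 := by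
    intro k l'
    have h1 : (∑ i, l i • c i) (k, l') = (0 : ℝ) := by rw [hlc]; rfl
    have h2 : (∑ i, l i • c i) (k, l') = ∑ i, l i * (Q (σ i) k * xh i l') := by
      rw [WithLp.ofLp_sum, Finset.sum_apply (k, l') Finset.univ _]
      refine Finset.sum_congr rfl (fun i _ => ?_)
      have : (l i • c i) (k, l') = l i * (c i (k, l')) := rfl
      rw [this, ← hσ i, hφ_apply]
    have h3 : ∑ i, l i * (Q (σ i) k * xh i l') = ∑ j, ∑ i ∈ A j, l i * (Q j k * xh i l') := by
      rw [← Finset.sum_fiberwise_of_maps_to (fun i _ => Finset.mem_univ (σ i))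
        (fun i => l i * (Q (σ i) k * xh i l'))]
      refine Finset.sum_congr rfl (fun j _ => Finset.sum_congr rfl (fun i hi => ?_))
      have : σ i = j := (Finset.mem_filter.1 hi).2
      rw [this]
    have h4 : ∀ j, ∑ i ∈ A j, l i * (Q j k * xh i l') = v j l' * Q j k := by
      intro j
      rw [hv, Finset.sum_mul]
      refine Finset.sum_congr rfl (fun i _ => ?_)
      ring
    rw [h2, h3] at h1
    rw [← h1]
    exact Finset.sum_congr rfl (fun j _ => (h4 j).symm)
  have hveq : ∀ j l', v j l' = v (Fin.last κ) l' := by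
    intro j l'
    by_cases hj : j = Fin.last κ
    · rw [hj]
    · obtain ⟨k, hk⟩ := Fin.exists_castSucc_eq.2 hj
      have := hkey k l'
      rw [Qeval (fun j => v j l') k] at this
      rw [← hk]
      linarith
  have hwsum : ∀ j, ∑ i ∈ A j, l i = v j (Fin.last n) := by
    intro j
    rw [hv]
    refine Finset.sum_congr rfl (fun i _ => ?_)
    rw [hxh_last, mul_one]
  have htot : ∑ j, v j (Fin.last n) = 1 := by
    rw [show ∑ j, v j (Fin.last n) = ∑ j, ∑ i ∈ A j, l i from
      Finset.sum_congr rfl (fun j _ => (hwsum j).symm)]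
    rw [Finset.sum_fiberwise_of_maps_to (fun i _ => Finset.mem_univ (σ i)) l]
    exact hl1
  have hbar : v (Fin.last κ) (Fin.last n) = 1 / (κ + 1 : ℝ) := by
    have h5 : ∑ j, v j (Fin.last n) = (κ + 1 : ℝ) * v (Fin.last κ) (Fin.last n) := by
      rw [Finset.sum_congr rfl (fun j _ => hveq j (Fin.last n))]
      simp [Finset.sum_const, mul_comm]
    rw [h5] at htot
    have hκ : (κ + 1 : ℝ) ≠ 0 := by positivity
    field_simp
    linarith
  have hbarpos : (0:ℝ) < v (Fin.last κ) (Fin.last n) := by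
    rw [hbar]; positivity
  -- the partition
  set τ : Fin m → Fin (κ+1) := fun i' => if h' : (i' : ℕ) < N then σ ⟨i', h'⟩ else 0 with hτ
  set B : Fin (κ+1) → Finset (Fin m) := fun j => Finset.univ.filter (fun i' => τ i' = j) with hB
  have hτe : ∀ i : Fin N, τ (e i) = σ i := by
    intro i
    have hlt : ((e i : Fin m) : ℕ) < N := by
      simp [he, Fin.castLE]
    rw [hτ]
    simp only [dif_pos hlt]
    congr 1
  refine ⟨B, ?_, ?_, ?_⟩
  · intro j j' hjj'
    rw [Finset.disjoint_left]
    intro a ha ha'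
    rw [hB] at ha ha'
    exact hjj' ((Finset.mem_filter.1 ha).2 ▸ (Finset.mem_filter.1 ha').2.symm ▸ rfl)
  · ext i'
    simp only [Finset.mem_biUnion, Finset.mem_univ, iff_true]
    exact ⟨τ i', by rw [hB]; simp⟩
  · -- the common point
    set p : EuclideanSpace ℝ (Fin n) :=
      WithLp.toLp 2 (fun k => (κ + 1 : ℝ) * v (Fin.last κ) (Fin.castSucc k)) with hp
    refine ⟨p, Set.mem_iInter.2 (fun j => ?_)⟩
    have hwj : ∑ i ∈ A j, l i = 1 / (κ + 1 : ℝ) := by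
      rw [hwsum j, hveq j, hbar]
    have hmem := Finset.centerMass_mem_convexHull (A j) (w := l)
      (fun i _ => hl0 i) (by rw [hwj]; positivity) (z := fun i => x (e i))
      (s := x '' ↑(B j)) ?memz
    · have hpc : (A j).centerMass l (fun i => x (e i)) = p := by
        rw [Finset.centerMass, hwj]
        ext k
        have hs1 : ((1 / (κ+1:ℝ))⁻¹ • ∑ i ∈ A j, l i • x (e i)) k
            = (1 / (κ+1:ℝ))⁻¹ * ((∑ i ∈ A j, l i • x (e i)) k) := rfl
        rw [hs1, WithLp.ofLp_sum, Finset.sum_apply k (A j) _]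
        have hs2 : ∀ i, (l i • x (e i)) k = l i * x (e i) k := fun i => rfl
        rw [Finset.sum_congr rfl (fun i _ => hs2 i)]
        have hs3 : ∑ i ∈ A j, l i * x (e i) k = v j (Fin.castSucc k) := by
          rw [hv]
          exact Finset.sum_congr rfl (fun i _ => by rw [hxh_cast])
        rw [hs3, hveq j]
        rw [hp]
        show (1 / (κ+1:ℝ))⁻¹ * v (Fin.last κ) (Fin.castSucc k)
          = (κ + 1 : ℝ) * v (Fin.last κ) (Fin.castSucc k)
        congr 1
        field_simp
      rwa [hpc] at hmem
    · intro i hi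
      refine ⟨e i, ?_, rfl⟩
      rw [hB]
      simp only [Finset.coe_filter, Finset.mem_univ, true_and, Set.mem_setOf_eq]
      rw [hτe i]
      exact (Finset.mem_filter.1 hi).2
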